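/- If F = {f_1, ..., f_n} is a biangular tight unit-norm frame for F^m with frame angles alpha_1 and alpha_2 and corresponding frame angle multiplicities tau_1 and tau_2, then tau_1 = ((n-1)/(alpha_2^2 - alpha_1^2)) * (alpha_2^2 - (n-m)/(m(n-1))) and tau_2 = ((n-1)/(alpha_1^2 - alpha_2^2)) * (alpha_1^2 - (n-m)/(m(n-1))). -/

import Mathlib

open Finset

/-- If `F = {f_1, ..., f_n}` is a biangular tight unit-norm frame for `𝔽^m`
with frame angles `α₁, α₂` and corresponding frame angle multiplicities `τ₁, τ₂`, then
`τ₁ = ((n-1)/(α₂² - α₁²)) (α₂² - (n-m)/(m(n-1)))` and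
`τ₂ = ((n-1)/(α₁² - α₂²)) (α₁² - (n-m)/(m(n-1)))`. -/
theorem statement2 {𝕜 : Type*} [RCLike 𝕜] {m n : ℕ}
    (f : Fin n → EuclideanSpace 𝕜 (Fin m)) (a : ℝ) (α₁ α₂ : ℝ) (τ₁ τ₂ : ℕ)
    (h_span : Submodule.span 𝕜 (Set.range f) = ⊤)
    (h_norm : ∀ j, ‖f j‖ = 1)
    (ha : 0 < a)
    (h_tight : ∀ v : EuclideanSpace 𝕜 (Fin m),
      ∑ j, (inner 𝕜 (f j) v : 𝕜) • f j = (a : 𝕜) • v)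
    (h_angles : {r : ℝ | ∃ j j', j ≠ j' ∧ ‖(inner 𝕜 (f j) (f j') : 𝕜)‖ = r} = {α₁, α₂})
    (h_ne : α₁ ≠ α₂)
    (h_pos₁ : 0 < τ₁) (h_pos₂ : 0 < τ₂)
    (h_mult₁ : ∀ j, Nat.card {j' : Fin n | j' ≠ j ∧ ‖(inner 𝕜 (f j) (f j') : 𝕜)‖ = α₁} = τ₁)
    (h_mult₂ : ∀ j, Nat.card {j' : Fin n | j' ≠ j ∧ ‖(inner 𝕜 (f j) (f j') : 𝕜)‖ = α₂} = τ₂) :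
    (τ₁ : ℝ) = ((n : ℝ) - 1) / (α₂ ^ 2 - α₁ ^ 2) *
        (α₂ ^ 2 - ((n : ℝ) - m) / ((m : ℝ) * ((n : ℝ) - 1))) ∧
    (τ₂ : ℝ) = ((n : ℝ) - 1) / (α₁ ^ 2 - α₂ ^ 2) *
        (α₁ ^ 2 - ((n : ℝ) - m) / ((m : ℝ) * ((n : ℝ) - 1))) := by
  classical
  -- α₁, α₂ are attained, hence nonneg, and n ≥ 2
  have hα₁mem : α₁ ∈ {r : ℝ | ∃ j j', j ≠ j' ∧ ‖(inner 𝕜 (f j) (f j') : 𝕜)‖ = r} := by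
    rw [h_angles]; exact Set.mem_insert _ _
  have hα₂mem : α₂ ∈ {r : ℝ | ∃ j j', j ≠ j' ∧ ‖(inner 𝕜 (f j) (f j') : 𝕜)‖ = r} := by
    rw [h_angles]; exact Set.mem_insert_iff.mpr (Or.inr rfl)
  obtain ⟨j₁, j₁', hj₁ne, hv₁⟩ := hα₁mem
  obtain ⟨j₂, j₂', hj₂ne, hv₂⟩ := hα₂mem
  have hα₁nn : 0 ≤ α₁ := hv₁ ▸ norm_nonneg _
  have hα₂nn : 0 ≤ α₂ := hv₂ ▸ norm_nonneg _
  have hn2 : 2 ≤ n := by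
    have : Nontrivial (Fin n) := ⟨⟨j₁, j₁', hj₁ne⟩⟩
    have := Fintype.one_lt_card (α := Fin n)
    exact (by simpa using this : 1 < n)
  -- per-index frame potential identity
  have keyA : ∀ j, ∑ j', ‖(inner 𝕜 (f j) (f j') : 𝕜)‖ ^ 2 = a := by
    intro j
    have h := congrArg (fun v => (inner 𝕜 (f j) v : 𝕜)) (h_tight (f j))
    simp only [inner_sum, inner_smul_right] at h
    have h' : ∑ j', ((‖(inner 𝕜 (f j) (f j') : 𝕜)‖ ^ 2 : ℝ) : 𝕜) = ((a : ℝ) : 𝕜) := by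
      calc ∑ j', ((‖(inner 𝕜 (f j) (f j') : 𝕜)‖ ^ 2 : ℝ) : 𝕜)
          = ∑ j', (inner 𝕜 (f j') (f j) : 𝕜) * inner 𝕜 (f j) (f j') := by
            refine Finset.sum_congr rfl (fun j' _ => ?_)
            rw [← inner_conj_symm (f j') (f j), RCLike.conj_mul]
            push_cast; ring
        _ = (a : 𝕜) * inner 𝕜 (f j) (f j) := h
        _ = ((a : ℝ) : 𝕜) := by
            rw [@inner_self_eq_norm_sq_to_K 𝕜, h_norm j]; push_cast; ring
    exact_mod_cast h'
  -- trace identity : n = a * m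
  have keyB : (n : ℝ) = a * m := by
    set b := EuclideanSpace.basisFun (Fin m) 𝕜 with hb
    have h1 : ∀ i, ∑ j, (inner 𝕜 (f j) (b i) : 𝕜) * inner 𝕜 (b i) (f j) = (a : 𝕜) := by
      intro i
      have h := congrArg (fun v => (inner 𝕜 (b i) v : 𝕜)) (h_tight (b i))
      simp only [inner_sum, inner_smul_right] at h
      have hbi : (inner 𝕜 (b i) (b i) : 𝕜) = 1 := by
        rw [@inner_self_eq_norm_sq_to_K 𝕜, b.orthonormal.1 i]
        norm_num
      rw [hbi, mul_one] at h
      exact h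
    have h2 : ∀ j, ∑ i, (inner 𝕜 (f j) (b i) : 𝕜) * inner 𝕜 (b i) (f j) = 1 := by
      intro j
      rw [b.sum_inner_mul_inner, @inner_self_eq_norm_sq_to_K 𝕜, h_norm j]
      norm_num
    have hswap : ∑ i, ∑ j, (inner 𝕜 (f j) (b i) : 𝕜) * inner 𝕜 (b i) (f j)
        = ∑ j, ∑ i, (inner 𝕜 (f j) (b i) : 𝕜) * inner 𝕜 (b i) (f j) := Finset.sum_comm
    have : ((m : ℝ) * a : ℝ) = ((n : ℝ) : ℝ) := by
      have e1 : ∑ i : Fin m, ∑ j, (inner 𝕜 (f j) (b i) : 𝕜) * inner 𝕜 (b i) (f j) = (m : 𝕜) * (a : 𝕜) := by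
        simp only [h1, Finset.sum_const, card_univ, Fintype.card_fin, nsmul_eq_mul]
      have e2 : ∑ j : Fin n, ∑ i, (inner 𝕜 (f j) (b i) : 𝕜) * inner 𝕜 (b i) (f j) = (n : 𝕜) := by
        simp only [h2, Finset.sum_const, card_univ, Fintype.card_fin, nsmul_eq_mul, mul_one]
      rw [hswap, e2] at e1
      exact_mod_cast e1.symm
    linarith [this]
  -- counting sets
  have hc₁ : ∀ j, (univ.filter (fun j' => j' ≠ j ∧ ‖(inner 𝕜 (f j) (f j') : 𝕜)‖ = α₁)).card = τ₁ := by
    intro j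
    rw [← h_mult₁ j, Nat.card_eq_fintype_card]
    exact (Fintype.card_subtype _).symm
  have hc₂ : ∀ j, (univ.filter (fun j' => j' ≠ j ∧ ‖(inner 𝕜 (f j) (f j') : 𝕜)‖ = α₂)).card = τ₂ := by
    intro j
    rw [← h_mult₂ j, Nat.card_eq_fintype_card]
    exact (Fintype.card_subtype _).symm
  have hval : ∀ j j' : Fin n, j' ≠ j → ‖(inner 𝕜 (f j) (f j') : 𝕜)‖ = α₁ ∨ ‖(inner 𝕜 (f j) (f j') : 𝕜)‖ = α₂ := by
    intro j j' hne
    have hmem : ‖(inner 𝕜 (f j) (f j') : 𝕜)‖ ∈ {r : ℝ | ∃ j j', j ≠ j' ∧ ‖(inner 𝕜 (f j) (f j') : 𝕜)‖ = r} :=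
      ⟨j, j', hne.symm, rfl⟩
    rw [h_angles] at hmem
    simpa using hmem
  have hunion : ∀ j : Fin n, univ.filter (fun j' => j' ≠ j)
      = univ.filter (fun j' => j' ≠ j ∧ ‖(inner 𝕜 (f j) (f j') : 𝕜)‖ = α₁)
        ∪ univ.filter (fun j' => j' ≠ j ∧ ‖(inner 𝕜 (f j) (f j') : 𝕜)‖ = α₂) := by
    intro j
    ext j'
    simp only [mem_filter, mem_union, mem_univ, true_and]
    constructor
    · intro hne
      rcases hval j j' hne with h | h
      · exact Or.inl ⟨hne, h⟩
      · exact Or.inr ⟨hne, h⟩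
    · rintro (⟨hne, _⟩ | ⟨hne, _⟩) <;> exact hne
  have hdisj : ∀ j : Fin n,
      Disjoint (univ.filter (fun j' => j' ≠ j ∧ ‖(inner 𝕜 (f j) (f j') : 𝕜)‖ = α₁))
        (univ.filter (fun j' => j' ≠ j ∧ ‖(inner 𝕜 (f j) (f j') : 𝕜)‖ = α₂)) := by
    intro j
    rw [Finset.disjoint_left]
    intro x hx₁ hx₂
    simp only [mem_filter] at hx₁ hx₂
    exact h_ne (hx₁.2.2 ▸ hx₂.2.2 ▸ rfl)
  -- τ₁ + τ₂ = n - 1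
  have hcount : τ₁ + τ₂ = n - 1 := by
    have h1 : (univ.filter (fun j' => j' ≠ j₁)).card = n - 1 := by
      rw [Finset.filter_ne', Finset.card_erase_of_mem (mem_univ _), card_univ, Fintype.card_fin]
    rw [hunion j₁, Finset.card_union_of_disjoint (hdisj j₁), hc₁ j₁, hc₂ j₁] at h1
    exact h1
  have hτℝ : (τ₁ : ℝ) + (τ₂ : ℝ) = (n : ℝ) - 1 := by
    have : τ₁ + τ₂ + 1 = n := by omega
    have := congrArg (fun k : ℕ => (k : ℝ)) this
    push_cast at this
    linarith
  -- sum over off-diagonal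
  have hsum : (τ₁ : ℝ) * α₁ ^ 2 + (τ₂ : ℝ) * α₂ ^ 2 = a - 1 := by
    have hself : ‖(inner 𝕜 (f j₁) (f j₁) : 𝕜)‖ ^ 2 = 1 := by
      rw [@inner_self_eq_norm_sq_to_K 𝕜, h_norm j₁]
      simp
    have hsplit : ∑ j' ∈ univ.erase j₁, ‖(inner 𝕜 (f j₁) (f j') : 𝕜)‖ ^ 2
        + ‖(inner 𝕜 (f j₁) (f j₁) : 𝕜)‖ ^ 2 = a := by
      rw [Finset.sum_erase_add univ _ (mem_univ j₁)]
      exact keyA j₁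
    have herase : (univ : Finset (Fin n)).erase j₁ = univ.filter (fun j' => j' ≠ j₁) := by
      rw [Finset.filter_ne']
    rw [hself, herase, hunion j₁, Finset.sum_union (hdisj j₁)] at hsplit
    have e₁ : ∑ j' ∈ univ.filter (fun j' => j' ≠ j₁ ∧ ‖(inner 𝕜 (f j₁) (f j') : 𝕜)‖ = α₁),
        ‖(inner 𝕜 (f j₁) (f j') : 𝕜)‖ ^ 2 = (τ₁ : ℝ) * α₁ ^ 2 := by
      rw [Finset.sum_congr rfl (fun j' hj' => by
        rw [(Finset.mem_filter.1 hj').2.2]), Finset.sum_const, hc₁ j₁, nsmul_eq_mul]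
    have e₂ : ∑ j' ∈ univ.filter (fun j' => j' ≠ j₁ ∧ ‖(inner 𝕜 (f j₁) (f j') : 𝕜)‖ = α₂),
        ‖(inner 𝕜 (f j₁) (f j') : 𝕜)‖ ^ 2 = (τ₂ : ℝ) * α₂ ^ 2 := by
      rw [Finset.sum_congr rfl (fun j' hj' => by
        rw [(Finset.mem_filter.1 hj').2.2]), Finset.sum_const, hc₂ j₁, nsmul_eq_mul]
    rw [e₁, e₂] at hsplit
    linarith
  -- nonvanishing facts
  have hnR : (2 : ℝ) ≤ (n : ℝ) := by exact_mod_cast hn2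
  have hn1 : (n : ℝ) - 1 ≠ 0 := by linarith
  have hm : (m : ℝ) ≠ 0 := by
    intro h0
    rw [h0, mul_zero] at keyB
    linarith
  have hd1 : α₂ ^ 2 - α₁ ^ 2 ≠ 0 := by
    intro h0
    have hprod : (α₁ - α₂) * (α₁ + α₂) = 0 := by ring_nf; linarith
    rcases mul_eq_zero.1 hprod with h | h
    · exact h_ne (by linarith)
    · exact h_ne (by linarith)
  have hd2 : α₁ ^ 2 - α₂ ^ 2 ≠ 0 := fun h0 => hd1 (by linarith)
  have hsum2 : (m : ℝ) * ((τ₁ : ℝ) * α₁ ^ 2 + (τ₂ : ℝ) * α₂ ^ 2) = (n : ℝ) - m := by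
    linear_combination (m : ℝ) * hsum - keyB
  have key1 : (τ₁ : ℝ) * (α₂ ^ 2 - α₁ ^ 2) = ((n : ℝ) - 1) * α₂ ^ 2 - ((n : ℝ) - m) / m := by
    field_simp
    linear_combination (m : ℝ) * α₂ ^ 2 * hτℝ - hsum2
  have key2 : (τ₂ : ℝ) * (α₁ ^ 2 - α₂ ^ 2) = ((n : ℝ) - 1) * α₁ ^ 2 - ((n : ℝ) - m) / m := by
    field_simp
    linear_combination (m : ℝ) * α₁ ^ 2 * hτℝ - hsum2
  constructor
  · rw [div_mul_eq_mul_div, eq_div_iff hd1, key1]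
    field_simp
  · rw [div_mul_eq_mul_div, eq_div_iff hd2, key2]
    field_simp
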